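/- Let A = ℤ⟨X,Y⟩ and p = 2. There exists an element x = (x₀,x₁,x₂,...) ∈ X(A) such that x_n ∈ [A,A] for every n ≥ 0, but x does not lie in the topological closure of [X(A),X(A)]. Consequently, the natural map HH₀(X(A)) := X(A)/closure([X(A),X(A)]) → (A/[A,A])^{ℕ₀}, induced by the inclusion X(A) ⊆ A^{ℕ₀} followed by the componentwise quotient A → A/[A,A], is not injective. -/

import Mathlib

/-- Verschiebung operator: `V(a₀,a₁,...) = p·(0,a₀,a₁,...)`. -/
def Vb (p : ℕ) {A : Type*} [Ring A] (a : ℕ → A) : ℕ → A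
  | 0 => 0
  | n + 1 => (p : A) * a n

/-- Teichmüller element: `⟨a⟩ = (a, a^p, a^{p²}, ...)`. -/
def tm (p : ℕ) {A : Type*} [Ring A] (a : A) : ℕ → A := fun n => a ^ p ^ n

/-- Generators of `X(A)`: all `V^m(⟨a₁⟩⋯⟨a_r⟩)` with `m ∈ ℕ₀`, `r ≥ 1`, `aᵢ ∈ A`. -/
def XAgen (p : ℕ) (A : Type*) [Ring A] : Set (ℕ → A) :=
  {x | ∃ (m : ℕ) (l : List A), l ≠ [] ∧ x = (Vb p)^[m] ((l.map (tm p)).prod)}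

/-- `X(A)`: the topological closure of the additive subgroup generated by `XAgen`. -/
noncomputable def XA (p : ℕ) (A : Type*) [Ring A] [TopologicalSpace A] [DiscreteTopology A] :
    AddSubgroup (ℕ → A) :=
  (AddSubgroup.closure (XAgen p A)).topologicalClosure

/-- The set of commutators `xy − yx` with `x, y ∈ X(A)`. -/
def commXA (p : ℕ) (A : Type*) [Ring A] [TopologicalSpace A] [DiscreteTopology A] :
    Set (ℕ → A) :=
  {z | ∃ x ∈ XA p A, ∃ y ∈ XA p A, z = x * y - y * x}

/-- Words in the two letters `X, Y`. -/
abbrev FW := FreeMonoid (Fin 2)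

/-- `A = ℤ⟨X,Y⟩`. -/
abbrev A2 := MonoidAlgebra ℤ FW

instance : TopologicalSpace A2 := ⊥
instance : DiscreteTopology A2 := ⟨rfl⟩

/-- The set of commutators of `A`, generating `[A,A]`. -/
def commA : Set A2 := {x | ∃ a b : A2, x = a * b - b * a}

/-- for `A = ℤ⟨X,Y⟩` and `p = 2`, there is an element
`x = (x₀,x₁,...) ∈ X(A)` all of whose components lie in `[A,A]`, but which does not lie in
the topological closure of `[X(A),X(A)]`.  (Consequently the natural "ghost" map
`HH₀(X(A)) = X(A)/closure([X(A),X(A)]) → (A/[A,A])^{ℕ₀}` is not injective.) -/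
instance : DecidableEq FW := inferInstanceAs (DecidableEq (List (Fin 2)))

def ow (l : List (Fin 2)) : FW := FreeMonoid.ofList l

noncomputable def cf (w : FW) : A2 →+ ZMod 2 :=
  ((Int.castAddHom (ZMod 2)).comp (Finsupp.applyAddHom w)).comp
    MonoidAlgebra.coeffAddEquiv.toAddMonoidHom


-- split lemma
lemma split_lists {u v : FW} {l : List (Fin 2)} (h : u * v = ow l) :
    FreeMonoid.toList u = l.take (FreeMonoid.toList u).length ∧
    FreeMonoid.toList v = l.drop (FreeMonoid.toList u).length ∧
    (FreeMonoid.toList u).length ≤ l.length := by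
  have h' : FreeMonoid.toList u ++ FreeMonoid.toList v = l := by
    rw [← FreeMonoid.toList_mul, h]; rfl
  refine ⟨?_, ?_, ?_⟩
  · rw [← h', List.take_left]
  · rw [← h', List.drop_left]
  · rw [← h']; simp

lemma mem_antidiag_single (a : Fin 2) :
    ∀ {p : FW × FW}, p ∈ ({(ow [], ow [a]), (ow [a], ow [])} : Finset (FW × FW)) ↔
      p.1 * p.2 = ow [a] := by
  intro p
  constructor
  · intro hp
    fin_cases hp <;> rfl
  · intro h
    obtain ⟨hu, hv, hl⟩ := split_lists h
    have h1 : p.1 = FreeMonoid.ofList (FreeMonoid.toList p.1) := rfl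
    have h2 : p.2 = FreeMonoid.ofList (FreeMonoid.toList p.2) := rfl
    simp only [List.length_singleton] at hl
    obtain h0 | h0 : (FreeMonoid.toList p.1).length = 0 ∨ (FreeMonoid.toList p.1).length = 1 := by
      omega
    · rw [h0] at hu hv
      simp only [List.take_zero, List.drop_zero] at hu hv
      have : p = (ow [], ow [a]) := Prod.ext (by rw [h1, hu]; rfl) (by rw [h2, hv]; rfl)
      simp [this]
    · rw [h0] at hu hv
      simp only [List.take_succ_cons, List.take_zero, List.drop_succ_cons, List.drop_zero]
        at hu hv
      have : p = (ow [a], ow []) := Prod.ext (by rw [h1, hu]; rfl) (by rw [h2, hv]; rfl)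
      simp [this]

lemma conv_single (f g : A2) (a : Fin 2) :
    (f * g).coeff (ow [a]) = f.coeff (ow []) * g.coeff (ow [a]) + f.coeff (ow [a]) * g.coeff (ow []) := by
  rw [MonoidAlgebra.mul_apply_antidiagonal f g _ _ (mem_antidiag_single a)]
  rw [Finset.sum_pair (by
    intro h
    have := congrArg (fun q => (FreeMonoid.toList q.1).length) h
    simp [ow] at this)]

def w4 : List (Fin 2) := [0, 1, 0, 1]

def S4 : Finset (FW × FW) :=
  {(ow [], ow w4), (ow [0], ow [1,0,1]), (ow [0,1], ow [0,1]), (ow [0,1,0], ow [1]),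
    (ow w4, ow [])}

lemma mem_antidiag_w4 : ∀ {p : FW × FW}, p ∈ S4 ↔ p.1 * p.2 = ow w4 := by
  intro p
  constructor
  · intro hp
    fin_cases hp <;> rfl
  · intro h
    obtain ⟨hu, hv, hl⟩ := split_lists h
    have h1 : p.1 = FreeMonoid.ofList (FreeMonoid.toList p.1) := rfl
    have h2 : p.2 = FreeMonoid.ofList (FreeMonoid.toList p.2) := rfl
    have hl4 : (FreeMonoid.toList p.1).length ≤ 4 := hl
    obtain h0 | h0 | h0 | h0 | h0 : (FreeMonoid.toList p.1).length = 0 ∨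
        (FreeMonoid.toList p.1).length = 1 ∨ (FreeMonoid.toList p.1).length = 2 ∨
        (FreeMonoid.toList p.1).length = 3 ∨ (FreeMonoid.toList p.1).length = 4 := by omega
    all_goals
      rw [h0] at hu hv
      have hu' : FreeMonoid.toList p.1 = _ := hu
      have hv' : FreeMonoid.toList p.2 = _ := hv
      have hp : p = (FreeMonoid.ofList (FreeMonoid.toList p.1),
          FreeMonoid.ofList (FreeMonoid.toList p.2)) := rfl
      rw [hu', hv'] at hp
      simp only [hp, S4]
      decide

lemma conv_w4 (f g : A2) :
    (f * g).coeff (ow w4) = f.coeff (ow []) * g.coeff (ow w4) + f.coeff (ow [0]) * g.coeff (ow [1,0,1])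
      + f.coeff (ow [0,1]) * g.coeff (ow [0,1]) + f.coeff (ow [0,1,0]) * g.coeff (ow [1]) + f.coeff (ow w4) * g.coeff (ow []) := by
  rw [MonoidAlgebra.mul_apply_antidiagonal f g _ _ mem_antidiag_w4]
  show ∑ p ∈ S4, f.coeff p.1 * g.coeff p.2 = _
  rw [show S4 = insert (ow [], ow w4) (insert (ow [0], ow [1,0,1]) (insert (ow [0,1], ow [0,1])
    (insert (ow [0,1,0], ow [1]) {(ow w4, ow [])}))) from rfl]
  rw [Finset.sum_insert (by decide), Finset.sum_insert (by decide),
    Finset.sum_insert (by decide), Finset.sum_insert (by decide), Finset.sum_singleton]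
  ring

/-- the key even-coefficient predicate -/
def Sp (s : A2) : Prop := cf (ow [0]) s = 0 ∧ cf (ow [1]) s = 0

lemma cf_mul_expand (a : Fin 2) (s t : A2) :
    cf (ow [a]) (s * t) = ((s.coeff (ow []) : ℤ) : ZMod 2) * cf (ow [a]) t
      + cf (ow [a]) s * ((t.coeff (ow []) : ℤ) : ZMod 2) := by
  show (((s * t).coeff (ow [a]) : ℤ) : ZMod 2) = _
  rw [conv_single s t a]
  push_cast
  rfl

lemma Sp.mul {s t : A2} (hs : Sp s) (ht : Sp t) : Sp (s * t) := by
  constructor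
  · rw [cf_mul_expand, hs.1, ht.1, mul_zero, zero_add, zero_mul]
  · rw [cf_mul_expand, hs.2, ht.2, mul_zero, zero_add, zero_mul]

lemma Sp.sq (a : A2) : Sp (a * a) := by
  constructor <;>
  · rw [cf_mul_expand]
    show ((a.coeff (ow []) : ℤ) : ZMod 2) * (((a.coeff _ : ℤ)) : ZMod 2)
      + (((a.coeff _ : ℤ)) : ZMod 2) * ((a.coeff (ow []) : ℤ) : ZMod 2) = 0
    rw [mul_comm]
    exact CharTwo.add_self_eq_zero _

lemma Sp.one : Sp 1 := by
  constructor <;>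
  · show (((1 : A2).coeff _ : ℤ) : ZMod 2) = 0
    rw [MonoidAlgebra.one_def, MonoidAlgebra.coeff_single_apply, if_neg (by decide)]
    rfl

lemma Sp.listProd (L : List A2) (h : ∀ a ∈ L, Sp a) : Sp L.prod := by
  induction L with
  | nil => simpa using Sp.one
  | cons a l ih =>
    rw [List.prod_cons]
    exact (h a (by simp)).mul (ih fun b hb => h b (List.mem_cons_of_mem _ hb))

/-- Key lemma 2: the commutator of two `Sp` elements has even `xyxy` coefficient. -/
lemma key2 {s t : A2} (hs : Sp s) (ht : Sp t) : cf (ow w4) (s * t - t * s) = 0 := by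
  have e : cf (ow w4) (s * t - t * s)
      = cf (ow [0]) s * ((t.coeff (ow [1,0,1]) : ℤ) : ZMod 2)
        + ((s.coeff (ow [0,1,0]) : ℤ) : ZMod 2) * cf (ow [1]) t
        - cf (ow [0]) t * ((s.coeff (ow [1,0,1]) : ℤ) : ZMod 2)
        - ((t.coeff (ow [0,1,0]) : ℤ) : ZMod 2) * cf (ow [1]) s := by
    show ((((s * t - t * s : A2)).coeff (ow w4) : ℤ) : ZMod 2) = _
    have : (s * t - t * s : A2).coeff (ow w4) = (s * t).coeff (ow w4) - (t * s).coeff (ow w4) := rfl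
    rw [this, conv_w4 s t, conv_w4 t s]
    push_cast
    show _ = ((s.coeff (ow [0]) : ℤ) : ZMod 2) * _ + _ * ((t.coeff (ow [1]) : ℤ) : ZMod 2)
      - ((t.coeff (ow [0]) : ℤ) : ZMod 2) * _ - _ * ((s.coeff (ow [1]) : ℤ) : ZMod 2)
    ring
  rw [e, hs.1, ht.1, hs.2, ht.2]
  ring

lemma Sp.double (c : A2) : Sp (c + c) := by
  constructor <;> · rw [map_add]; exact CharTwo.add_self_eq_zero _

lemma gen_Sp : ∀ g ∈ XAgen 2 A2, Sp (g 1) := by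
  rintro g ⟨m, l, -, rfl⟩
  match m with
  | 0 =>
    show Sp (((l.map (tm 2)).prod) 1)
    have : ((l.map (tm 2)).prod) 1 = ((l.map (tm 2)).map (Pi.evalRingHom (fun _ => A2) 1)).prod :=
      map_list_prod (Pi.evalRingHom (fun _ => A2) 1) _
    rw [this, List.map_map]
    apply Sp.listProd
    rintro b hb
    simp only [List.mem_map, Function.comp_apply] at hb
    obtain ⟨a, -, rfl⟩ := hb
    show Sp (tm 2 a 1)
    have : tm 2 a 1 = a * a := by
      show a ^ 2 ^ 1 = a * a
      rw [pow_one, pow_two]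
    rw [this]
    exact Sp.sq a
  | k + 1 =>
    rw [Function.iterate_succ_apply']
    show Sp (Vb 2 ((Vb 2)^[k] ((l.map (tm 2)).prod)) 1)
    show Sp (((2 : ℕ) : A2) * ((Vb 2)^[k] ((l.map (tm 2)).prod)) 0)
    rw [Nat.cast_ofNat, two_mul]
    exact Sp.double _

noncomputable def K : AddSubgroup (ℕ → A2) :=
  ((cf (ow [0])).comp (Pi.evalAddMonoidHom (fun _ => A2) 1)).ker ⊓
  ((cf (ow [1])).comp (Pi.evalAddMonoidHom (fun _ => A2) 1)).ker

lemma key1 {u : ℕ → A2} (hu : u ∈ XA 2 A2) : Sp (u 1) := by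
  have hu' : u ∈ closure ((AddSubgroup.closure (XAgen 2 A2) : AddSubgroup (ℕ → A2)) :
      Set (ℕ → A2)) := hu
  have hU : IsOpen ((fun z : ℕ → A2 => z 1) ⁻¹' {u 1}) :=
    (continuous_apply 1).isOpen_preimage _ (isOpen_discrete _)
  obtain ⟨g, hgU, hgG⟩ := mem_closure_iff.mp hu' _ hU rfl
  have hle : AddSubgroup.closure (XAgen 2 A2) ≤ K := by
    rw [AddSubgroup.closure_le]
    intro g hg
    have := gen_Sp g hg
    exact ⟨this.1, this.2⟩
  have hgK := hle hgG
  have h1 : cf (ow [0]) (g 1) = 0 := hgK.1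
  have h2 : cf (ow [1]) (g 1) = 0 := hgK.2
  have : g 1 = u 1 := hgU
  rw [this] at h1 h2
  exact ⟨h1, h2⟩

lemma pow_comm_aux {M : Type*} [Monoid M] (x y : M) : ∀ m : ℕ,
    (x * y) ^ (m + 1) = x * ((y * x) ^ m * y)
  | 0 => by simp
  | m + 1 => by
    rw [pow_succ' (x * y), pow_comm_aux x y m, pow_succ' (y * x)]
    simp only [mul_assoc]

noncomputable def θ : (ℕ → A2) →+ ZMod 2 :=
  (cf (ow w4)).comp (Pi.evalAddMonoidHom (fun _ => A2) 1)

noncomputable def Xg : A2 := MonoidAlgebra.of ℤ FW (FreeMonoid.of 0)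
noncomputable def Yg : A2 := MonoidAlgebra.of ℤ FW (FreeMonoid.of 1)


theorem stmt18 :
    ∃ x : ℕ → A2, x ∈ XA 2 A2 ∧ (∀ n, x n ∈ AddSubgroup.closure commA) ∧
      x ∉ closure ((AddSubgroup.closure (commXA 2 A2) : AddSubgroup (ℕ → A2)) :
        Set (ℕ → A2)) := by
  refine ⟨tm 2 (Xg * Yg) - tm 2 (Yg * Xg), ?_, ?_, ?_⟩
  · apply AddSubgroup.le_topologicalClosure
    refine sub_mem (AddSubgroup.subset_closure ⟨0, [Xg * Yg], by simp, by simp⟩)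
      (AddSubgroup.subset_closure ⟨0, [Yg * Xg], by simp, by simp⟩)
  · intro n
    apply AddSubgroup.subset_closure
    refine ⟨Xg, (Yg * Xg) ^ (2 ^ n - 1) * Yg, ?_⟩
    show tm 2 (Xg * Yg) n - tm 2 (Yg * Xg) n = _
    show (Xg * Yg) ^ 2 ^ n - (Yg * Xg) ^ 2 ^ n = _
    have h1 : 2 ^ n - 1 + 1 = 2 ^ n := Nat.sub_add_cancel Nat.one_le_two_pow
    have h2 : (Yg * Xg) ^ (2 ^ n - 1) * Yg * Xg = (Yg * Xg) ^ 2 ^ n := by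
      rw [mul_assoc, ← pow_succ, h1]
    have h3 : (Xg * Yg) ^ 2 ^ n = Xg * ((Yg * Xg) ^ (2 ^ n - 1) * Yg) := by
      conv_lhs => rw [← h1]
      rw [pow_comm_aux]
    rw [h3, h2]
  · intro hmem
    -- θ vanishes on the closure subgroup
    have hker : AddSubgroup.closure (commXA 2 A2) ≤ θ.ker := by
      rw [AddSubgroup.closure_le]
      rintro z ⟨u, hu, v, hv, rfl⟩
      have : θ (u * v - v * u) = cf (ow w4) (u 1 * v 1 - v 1 * u 1) := rfl
      have hm : u * v - v * u ∈ θ.ker := AddMonoidHom.mem_ker.mpr (by rw [this]; exact key2 (key1 hu) (key1 hv))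
      exact hm
    -- extract an approximant agreeing at index 1
    set xw : ℕ → A2 := tm 2 (Xg * Yg) - tm 2 (Yg * Xg) with hxw
    have hU : IsOpen ((fun z : ℕ → A2 => z 1) ⁻¹' {xw 1}) :=
      (continuous_apply 1).isOpen_preimage _ (isOpen_discrete _)
    obtain ⟨z, hzU, hzG⟩ := mem_closure_iff.mp hmem _ hU rfl
    have hz0 : θ z = 0 := hker hzG
    have hz1 : z 1 = xw 1 := hzU
    have hcontra : θ z = cf (ow w4) (xw 1) := by
      show cf (ow w4) (z 1) = _
      rw [hz1]
    -- compute the coefficient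
    have hx : (Xg * Yg) ^ 2 ^ 1 =
        MonoidAlgebra.single ((FreeMonoid.of 0 * FreeMonoid.of 1 : FW) ^ 2 ^ 1) (1 : ℤ) := by
      rw [show Xg * Yg = MonoidAlgebra.of ℤ FW (FreeMonoid.of 0 * FreeMonoid.of 1) from
        (map_mul _ _ _).symm, ← map_pow]
      rfl
    have hy : (Yg * Xg) ^ 2 ^ 1 =
        MonoidAlgebra.single ((FreeMonoid.of 1 * FreeMonoid.of 0 : FW) ^ 2 ^ 1) (1 : ℤ) := by
      rw [show Yg * Xg = MonoidAlgebra.of ℤ FW (FreeMonoid.of 1 * FreeMonoid.of 0) from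
        (map_mul _ _ _).symm, ← map_pow]
      rfl
    have hval : cf (ow w4) (xw 1) = 1 := by
      have : xw 1 = (Xg * Yg) ^ 2 ^ 1 - (Yg * Xg) ^ 2 ^ 1 := rfl
      rw [hcontra] at hz0
      show (((xw 1).coeff (ow w4) : ℤ) : ZMod 2) = 1
      rw [this]
      have e1 : ((Xg * Yg) ^ 2 ^ 1 - (Yg * Xg) ^ 2 ^ 1 : A2).coeff (ow w4)
          = ((Xg * Yg) ^ 2 ^ 1 : A2).coeff (ow w4) - ((Yg * Xg) ^ 2 ^ 1 : A2).coeff (ow w4) := rfl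
      rw [e1, hx, hy, MonoidAlgebra.coeff_single_apply, MonoidAlgebra.coeff_single_apply,
        if_pos (by decide), if_neg (by decide)]
      rfl
    rw [hcontra, hval] at hz0
    exact one_ne_zero hz0
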